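/- Let n be a positive integer, ξ a complex non-real algebraic number of degree greater than n, and μ₀ ∈ ℂ* with dim_ℚ V_n(μ₀,ξ) > (n+1)/2. Then the ℚ-vector spaces V_n(μ₀,ξ) and X·V_n(μ₀,ξ) intersect trivially, i.e., V_n(μ₀,ξ) ∩ X·V_n(μ₀,ξ) = {0}. -/
import Mathlib


open Polynomial

/-- The ℚ-vector space of polynomials `f ∈ ℚ[X]` of degree at most `n`
with `μ * f(ξ) ∈ ℝ`. -/
noncomputable def Vspace (n : ℕ) (μ ξ : ℂ) : Submodule ℚ ℚ[X] where
  carrier := {f | f.natDegree ≤ n ∧ ∃ r : ℝ, μ * aeval ξ f = (r : ℂ)}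
  zero_mem' := ⟨by simp, 0, by simp⟩
  add_mem' := by
    rintro f g ⟨hf, r, hr⟩ ⟨hg, s, hs⟩
    refine ⟨(natDegree_add_le f g).trans (by simp [hf, hg]), r + s, ?_⟩
    push_cast
    rw [map_add, mul_add, hr, hs]
  smul_mem' := by
    rintro c f ⟨hf, r, hr⟩
    refine ⟨(natDegree_smul_le c f).trans hf, c * r, ?_⟩
    rw [map_smul, Algebra.mul_smul_comm, hr, Rat.smul_def]
    push_cast
    ring

/-- `t_n(ξ)`: the maximum over nonzero `μ ∈ ℂ` of `dim_ℚ V_n(μ,ξ)`. -/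
noncomputable def tdeg (n : ℕ) (ξ : ℂ) : ℕ :=
  sSup {d : ℕ | ∃ μ : ℂ, μ ≠ 0 ∧ d = Module.finrank ℚ (Vspace n μ ξ)}

theorem Vspace_inf_X_mul_Vspace_eq_bot (n : ℕ) (hn : 0 < n) (ξ : ℂ)
    (hξreal : ξ.im ≠ 0) (hξalg : IsAlgebraic ℚ ξ)
    (hdeg : n < (minpoly ℚ ξ).natDegree)
    (μ₀ : ℂ) (hμ₀ : μ₀ ≠ 0)
    (h₀ : n + 1 < 2 * Module.finrank ℚ (Vspace n μ₀ ξ)) :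
    Vspace n μ₀ ξ ⊓ (Vspace n μ₀ ξ).map (LinearMap.mulLeft ℚ (X : ℚ[X])) = ⊥ := by
  rw [eq_bot_iff]
  rintro f ⟨hfV, g, hgV, rfl⟩
  obtain ⟨hgdeg, s, hs⟩ := hgV
  obtain ⟨hfdeg, r, hr⟩ := hfV
  simp only [LinearMap.mulLeft_apply] at hr ⊢
  have hg0 : aeval ξ g = 0 := by
    by_contra hne
    have hs0 : (s : ℂ) ≠ 0 := hs ▸ mul_ne_zero hμ₀ hne
    have hxs : ξ * s = r := by
      rw [← hs, ← hr, map_mul, aeval_X]; ring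
    have hx : ξ = (r : ℂ) / (s : ℂ) := by
      field_simp at hxs ⊢; linear_combination hxs
    apply hξreal
    rw [hx, Complex.div_im]
    simp
  have hgz : g = 0 := by
    by_contra hgne
    have := Polynomial.natDegree_le_natDegree
      (Polynomial.degree_le_of_dvd (minpoly.dvd ℚ ξ hg0) hgne)
    omega
  simp [hgz]
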